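/- arXiv:2407.01240 — 3 statements merged into one kernel-verified Lean document; each statement's English description precedes it below -/
import Mathlib

section
/- For the infinite doubled cone based at radius R, the Gaussian area satisfies |C(R,∞,φ)| = 2 cos(φ) e^{-R²/4} + I(R,φ), where I(R,φ) = √π R sin²(φ) (1 - erf((R/2) cos(φ))) e^{-R² sin²(φ)/4} and erf(x) = (2/√π) ∫_0^x e^{-y²} dy; i.e., the identity sec(φ) ∫_R^∞ r e^{-(r² + tan²(φ)(r-R)²)/4} dr = 2 cos(φ) e^{-R²/4} + √π R sin²(φ)(1 - erf((R/2)cos(φ))) e^{-R² sin²(φ)/4} holds for all R > 0 and φ ∈ [0, π/2). -/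
open MeasureTheory Real

/-- The error function `erf(x) = (2/√π) ∫_0^x e^{-y²} dy`. -/
noncomputable def erf (x : ℝ) : ℝ :=
  (2 / Real.sqrt π) * ∫ y in (0 : ℝ)..x, Real.exp (-y ^ 2)

lemma expNegSq_cont : Continuous fun y : ℝ => Real.exp (-y ^ 2) := by continuity

lemma erf_hasDerivAt (x : ℝ) :
    HasDerivAt erf (2 / Real.sqrt π * Real.exp (-x ^ 2)) x := by
  have h : HasDerivAt (fun u => ∫ y in (0:ℝ)..u, Real.exp (-y ^ 2)) (Real.exp (-x ^ 2)) x :=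
    intervalIntegral.integral_hasDerivAt_right
      (expNegSq_cont.intervalIntegrable _ _)
      (expNegSq_cont.stronglyMeasurableAtFilter _ _)
      expNegSq_cont.continuousAt
  show HasDerivAt (fun u => 2 / Real.sqrt π * ∫ y in (0:ℝ)..u, Real.exp (-y ^ 2)) _ x
  exact h.const_mul (2 / Real.sqrt π)

lemma erf_tendsto : Filter.Tendsto erf Filter.atTop (nhds 1) := by
  have hi : MeasureTheory.IntegrableOn (fun y : ℝ => Real.exp (-y ^ 2)) (Set.Ioi 0) := by
    have := (integrable_exp_neg_mul_sq (by norm_num : (0:ℝ) < 1)).integrableOn (s := Set.Ioi 0)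
    simpa using this
  have h2 : Filter.Tendsto (fun x : ℝ => ∫ y in (0:ℝ)..x, Real.exp (-y ^ 2)) Filter.atTop
      (nhds (∫ y in Set.Ioi (0:ℝ), Real.exp (-y ^ 2))) :=
    MeasureTheory.intervalIntegral_tendsto_integral_Ioi 0 hi Filter.tendsto_id
  have hv : (∫ y in Set.Ioi (0:ℝ), Real.exp (-y ^ 2)) = Real.sqrt π / 2 := by
    have := integral_gaussian_Ioi 1
    simpa using this
  have hπ : Real.sqrt π ≠ 0 := by positivity
  have h3 := h2.const_mul (2 / Real.sqrt π)
  rw [hv] at h3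
  have heq : 2 / Real.sqrt π * (Real.sqrt π / 2) = 1 := by field_simp
  rw [heq] at h3
  exact h3

/-- Gaussian area of the infinite doubled cone:
`sec φ ∫_R^∞ r e^{-(r²+tan²φ(r-R)²)/4} dr
  = 2 cos φ e^{-R²/4} + √π R sin²φ (1 - erf((R/2)cos φ)) e^{-R² sin²φ/4}`. -/
theorem stmt_7 (R φ : ℝ) (hR : 0 < R) (hφ : φ ∈ Set.Ico 0 (π / 2)) :
    ((1 / Real.cos φ) *
        ∫ r in Set.Ioi R,
          r * Real.exp (-(r ^ 2 + Real.tan φ ^ 2 * (r - R) ^ 2) / 4)) =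
      2 * Real.cos φ * Real.exp (-R ^ 2 / 4) +
        Real.sqrt π * R * Real.sin φ ^ 2 * (1 - erf (R / 2 * Real.cos φ)) *
          Real.exp (-(R ^ 2 * Real.sin φ ^ 2) / 4) := by
  obtain ⟨hφ0, hφ2⟩ := hφ
  have hc : 0 < Real.cos φ :=
    Real.cos_pos_of_mem_Ioo ⟨by linarith [Real.pi_pos], hφ2⟩
  have hc' : Real.cos φ ≠ 0 := ne_of_gt hc
  set c := Real.cos φ with hcdef
  set s := Real.sin φ with hsdef
  have hsc : s ^ 2 + c ^ 2 = 1 := Real.sin_sq_add_cos_sq φ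
  have ht : Real.tan φ = s / c := Real.tan_eq_sin_div_cos φ
  have hπ : (0:ℝ) < Real.sqrt π := Real.sqrt_pos.mpr Real.pi_pos
  have hπ' : Real.sqrt π ≠ 0 := ne_of_gt hπ
  set m : ℝ := s ^ 2 * R with hmdef
  set K : ℝ := Real.sqrt π * c * m * Real.exp (-(R ^ 2 * s ^ 2) / 4) with hKdef
  set g : ℝ → ℝ := fun x =>
    -2 * c ^ 2 * Real.exp (-(x ^ 2 + Real.tan φ ^ 2 * (x - R) ^ 2) / 4) +
      K * erf ((x - m) / (2 * c)) with hgdef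
  -- derivative
  have hderiv : ∀ x, HasDerivAt g (x * Real.exp (-(x ^ 2 + Real.tan φ ^ 2 * (x - R) ^ 2) / 4)) x := by
    intro x
    have hq : HasDerivAt (fun x : ℝ => -(x ^ 2 + Real.tan φ ^ 2 * (x - R) ^ 2) / 4)
        (-(2 * x + Real.tan φ ^ 2 * (2 * (x - R) ^ 1 * 1)) / 4) x := by
      have h1 : HasDerivAt (fun x : ℝ => x ^ 2) (2 * x) x := by
        simpa using hasDerivAt_pow 2 x
      have h2 : HasDerivAt (fun x : ℝ => (x - R) ^ 2) (2 * (x - R) ^ 1 * 1) x :=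
        ((hasDerivAt_id x).sub_const R).pow 2
      exact ((h1.add (h2.const_mul _)).neg).div_const 4
    have hterm1 := (hq.exp).const_mul (-2 * c ^ 2)
    have hu : HasDerivAt (fun x : ℝ => (x - m) / (2 * c)) (1 / (2 * c)) x := by
      simpa using ((hasDerivAt_id x).sub_const m).div_const (2 * c)
    have hterm2 := ((erf_hasDerivAt ((x - m) / (2 * c))).comp x hu).const_mul K
    have hsum := hterm1.add hterm2
    refine hsum.congr_deriv (Eq.symm ?_)
    -- prove the derivative expression equality
    have hexp : Real.exp (-((x - m) / (2 * c)) ^ 2) =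
        Real.exp (-(x ^ 2 + Real.tan φ ^ 2 * (x - R) ^ 2) / 4) *
          Real.exp ((R ^ 2 * s ^ 2) / 4) := by
      rw [← Real.exp_add]
      congr 1
      rw [ht, hmdef, div_pow, div_pow]
      field_simp
      ring_nf
      linear_combination (4 * (x ^ 2 - s ^ 2 * R ^ 2)) * hsc
    rw [hexp, hKdef, hmdef, ht]
    have hexpK : Real.exp (-(R ^ 2 * s ^ 2) / 4) * Real.exp ((R ^ 2 * s ^ 2) / 4) = 1 := by
      rw [← Real.exp_add]; ring_nf; exact Real.exp_zero
    set E := Real.exp (-(x ^ 2 + (s / c) ^ 2 * (x - R) ^ 2) / 4) with hEdef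
    set e₁ := Real.exp (-(R ^ 2 * s ^ 2) / 4) with he1
    set e₂ := Real.exp ((R ^ 2 * s ^ 2) / 4) with he2
    field_simp
    linear_combination (-4 * x * E) * hsc +
      (-4 * E * s ^ 2 * R) * hexpK
  -- limit at infinity
  have hbot : Filter.Tendsto (fun x : ℝ => -(x ^ 2 + Real.tan φ ^ 2 * (x - R) ^ 2) / 4)
      Filter.atTop Filter.atBot := by
    apply Filter.tendsto_atBot_mono (fun x => ?_) (f := fun x : ℝ => -(x ^ 2) / 4)
    · have h0 : Filter.Tendsto (fun x : ℝ => x ^ 2) Filter.atTop Filter.atTop :=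
        Filter.tendsto_pow_atTop two_ne_zero
      exact (Filter.tendsto_neg_atTop_atBot.comp h0).atBot_div_const (by norm_num)
    · have : 0 ≤ Real.tan φ ^ 2 * (x - R) ^ 2 := by positivity
      nlinarith
  have htend : Filter.Tendsto g Filter.atTop (nhds K) := by
    have h0 : Filter.Tendsto
        (fun x : ℝ => Real.exp (-(x ^ 2 + Real.tan φ ^ 2 * (x - R) ^ 2) / 4))
        Filter.atTop (nhds 0) := Real.tendsto_exp_atBot.comp hbot
    have h1 := h0.const_mul (-2 * c ^ 2)
    rw [mul_zero] at h1
    have hu : Filter.Tendsto (fun x : ℝ => (x - m) / (2 * c)) Filter.atTop Filter.atTop := by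
      apply Filter.Tendsto.atTop_div_const (by positivity)
      simpa [sub_eq_add_neg] using Filter.tendsto_atTop_add_const_right Filter.atTop (-m) Filter.tendsto_id
    have h2 := (erf_tendsto.comp hu).const_mul K
    rw [mul_one] at h2
    have h3 := h1.add h2
    rw [zero_add] at h3
    exact h3
  have hpos : ∀ x ∈ Set.Ioi R, 0 ≤ x * Real.exp (-(x ^ 2 + Real.tan φ ^ 2 * (x - R) ^ 2) / 4) := by
    intro x hx
    have : 0 < x := lt_trans hR hx
    positivity
  have hint := integral_Ioi_of_hasDerivAt_of_nonneg' (fun x _ => hderiv x) hpos htend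
  rw [hint]
  -- compute g R
  have hmR : (R - m) / (2 * c) = R / 2 * c := by
    rw [hmdef, div_eq_iff (by positivity : (2:ℝ) * c ≠ 0)]
    linear_combination (-R) * hsc
  have hgR : g R = -2 * c ^ 2 * Real.exp (-R ^ 2 / 4) + K * erf (R / 2 * c) := by
    rw [hgdef]
    simp [hmR]
  rw [hgR, hKdef, hmdef]
  field_simp
  ring
end

section
/- If R ≤ 0.2 then √π R e^{R²/4} ≤ 1/2, and consequently for R ≤ 0.2 the function φ ↦ |C(R,∞,φ)| is strictly decreasing on (0, π/2]; in particular |C(R,∞,φ)| ≤ |C(R,∞,0)| = 2 e^{-R²/4} for all φ ∈ [0,π/2]. -/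
open MeasureTheory Real

/-- `I(R,φ) = √π R sin²φ (1 - erf((R/2)cos φ)) e^{-R² sin²φ/4}`. -/
noncomputable def Ifun (R φ : ℝ) : ℝ :=
  Real.sqrt π * R * Real.sin φ ^ 2 * (1 - erf (R / 2 * Real.cos φ)) *
    Real.exp (-(R ^ 2 * Real.sin φ ^ 2) / 4)

lemma erf_nonneg {x : ℝ} (hx : 0 ≤ x) : 0 ≤ erf x := by
  apply mul_nonneg (by positivity)
  exact intervalIntegral.integral_nonneg hx fun y _ => (Real.exp_pos _).le

/-- The derivative of `φ ↦ 2 cos φ e^{-R²/4} + I(R,φ)`. -/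
noncomputable def Dfun (R φ : ℝ) : ℝ :=
  -(2 * Real.sin φ * Real.exp (-R ^ 2 / 4))
  + Real.sqrt π * R * Real.sin φ * Real.cos φ * (1 - erf (R / 2 * Real.cos φ)) *
      Real.exp (-(R ^ 2 * Real.sin φ ^ 2) / 4) * (2 - R ^ 2 * Real.sin φ ^ 2 / 2)
  + R ^ 2 * Real.sin φ ^ 3 * Real.exp (-(R / 2 * Real.cos φ) ^ 2) *
      Real.exp (-(R ^ 2 * Real.sin φ ^ 2) / 4)

lemma f_hasDerivAt (R φ : ℝ) :
    HasDerivAt (fun φ => 2 * Real.cos φ * Real.exp (-R ^ 2 / 4) + Ifun R φ) (Dfun R φ) φ := by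
  have hπ : (0:ℝ) < Real.sqrt π := Real.sqrt_pos.2 Real.pi_pos
  have h1 : HasDerivAt (fun φ => 2 * Real.cos φ * Real.exp (-R ^ 2 / 4))
      (2 * (-Real.sin φ) * Real.exp (-R ^ 2 / 4)) φ :=
    ((Real.hasDerivAt_cos φ).const_mul 2).mul_const _
  have hsin2 : HasDerivAt (fun φ => Real.sin φ ^ 2)
      ((2 : ℕ) * Real.sin φ ^ 1 * Real.cos φ) φ := (Real.hasDerivAt_sin φ).pow 2
  have hg : HasDerivAt (fun φ => R / 2 * Real.cos φ) (R / 2 * (-Real.sin φ)) φ := by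
    simpa using (Real.hasDerivAt_cos φ).const_mul (R / 2)
  have herf : HasDerivAt (fun φ => erf (R / 2 * Real.cos φ))
      (2 / Real.sqrt π * Real.exp (-(R / 2 * Real.cos φ) ^ 2) * (R / 2 * (-Real.sin φ))) φ :=
    by have := (erf_hasDerivAt (R / 2 * Real.cos φ)).comp φ hg; exact this
  have h1mu : HasDerivAt (fun φ => 1 - erf (R / 2 * Real.cos φ))
      (-(2 / Real.sqrt π * Real.exp (-(R / 2 * Real.cos φ) ^ 2) * (R / 2 * (-Real.sin φ)))) φ :=
    herf.const_sub 1
  have hinner : HasDerivAt (fun φ => -(R ^ 2 * Real.sin φ ^ 2) / 4)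
      (-(R ^ 2 * ((2 : ℕ) * Real.sin φ ^ 1 * Real.cos φ)) / 4) φ :=
    ((hsin2.const_mul (R ^ 2)).neg).div_const 4
  have hexp : HasDerivAt (fun φ => Real.exp (-(R ^ 2 * Real.sin φ ^ 2) / 4))
      (Real.exp (-(R ^ 2 * Real.sin φ ^ 2) / 4) *
        (-(R ^ 2 * ((2 : ℕ) * Real.sin φ ^ 1 * Real.cos φ)) / 4)) φ := hinner.exp
  have hA : HasDerivAt (fun φ => Real.sqrt π * R * Real.sin φ ^ 2)
      (Real.sqrt π * R * ((2 : ℕ) * Real.sin φ ^ 1 * Real.cos φ)) φ :=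
    hsin2.const_mul _
  have hB := (hA.mul h1mu).mul hexp
  have hI : HasDerivAt (fun φ => Ifun R φ)
      (Real.sqrt π * R * Real.sin φ * Real.cos φ * (1 - erf (R / 2 * Real.cos φ)) *
        Real.exp (-(R ^ 2 * Real.sin φ ^ 2) / 4) * (2 - R ^ 2 * Real.sin φ ^ 2 / 2)
      + R ^ 2 * Real.sin φ ^ 3 * Real.exp (-(R / 2 * Real.cos φ) ^ 2) *
        Real.exp (-(R ^ 2 * Real.sin φ ^ 2) / 4)) φ := by
    convert hB using 1
    · rfl
    · rfl
    · rfl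
    simp only [Pi.mul_apply]
    field_simp
    ring
  exact (h1.add hI).congr_deriv (by unfold Dfun; ring)

lemma sqrt_pi_le : Real.sqrt π ≤ 1.7725 := by
  rw [show (1.7725 : ℝ) = Real.sqrt (1.7725 ^ 2) from (Real.sqrt_sq (by norm_num)).symm]
  exact Real.sqrt_le_sqrt (by nlinarith [Real.pi_lt_d6])

lemma numeric (R : ℝ) (hR0 : 0 < R) (hR : R ≤ 0.2) :
    Real.sqrt π * R * Real.exp (R ^ 2 / 4) ≤ 1 / 2 := by
  have hd : (0.99 : ℝ) ≤ Real.exp (-(R ^ 2 / 4)) := by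
    have := Real.add_one_le_exp (-(R ^ 2 / 4))
    nlinarith
  have hmul : Real.exp (R ^ 2 / 4) * Real.exp (-(R ^ 2 / 4)) = 1 := by
    rw [← Real.exp_add]; simp
  have hepos := Real.exp_pos (R ^ 2 / 4)
  have he : Real.exp (R ^ 2 / 4) ≤ 1 / 0.99 := by nlinarith
  have h0 : (0 : ℝ) ≤ Real.sqrt π := Real.sqrt_nonneg _
  have hpr : Real.sqrt π * R ≤ 0.3545 := by nlinarith [sqrt_pi_le]
  calc Real.sqrt π * R * Real.exp (R ^ 2 / 4)
      ≤ 0.3545 * Real.exp (R ^ 2 / 4) := mul_le_mul_of_nonneg_right hpr hepos.le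
    _ ≤ 0.3545 * (1 / 0.99) := by nlinarith
    _ ≤ 1 / 2 := by norm_num

lemma Dfun_neg_aux (s c u E1 E2 E sp R : ℝ) (hR0 : 0 < R) (hR : R ≤ 0.2)
    (hs : 0 < s) (hs1 : s ≤ 1) (hc : 0 ≤ c) (hc1 : c ≤ 1) (hu0 : 0 ≤ u)
    (hE1pos : 0 < E1) (hE1le : E1 ≤ 1) (hE2pos : 0 < E2) (hE2le : E2 ≤ 1)
    (hE : (0.99 : ℝ) ≤ E) (hsp0 : (0 : ℝ) ≤ sp) (hsp : sp ≤ 1.7725) :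
    -(2 * s * E) + sp * R * s * c * (1 - u) * E1 * (2 - R ^ 2 * s ^ 2 / 2)
      + R ^ 2 * s ^ 3 * E2 * E1 < 0 := by
  have hR2 : R ^ 2 ≤ 0.04 := by nlinarith
  have hs2 : s ^ 2 ≤ 1 := by nlinarith
  have hq0 : 0 ≤ R ^ 2 * s ^ 2 / 2 := by positivity
  have hq : R ^ 2 * s ^ 2 / 2 ≤ 2 := by nlinarith
  have hK : 0 ≤ sp * R * s * c * E1 * (2 - R ^ 2 * s ^ 2 / 2) := by
    apply mul_nonneg _ (by linarith)
    positivity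
  have t2 : sp * R * s * c * E1 * (2 - R ^ 2 * s ^ 2 / 2) ≤
      1.7725 * 0.2 * s * 1 * 1 * 2 := by
    gcongr <;> linarith
  have t2' : sp * R * s * c * (1 - u) * E1 * (2 - R ^ 2 * s ^ 2 / 2) ≤
      1.7725 * 0.2 * s * 1 * 1 * 2 := by
    calc sp * R * s * c * (1 - u) * E1 * (2 - R ^ 2 * s ^ 2 / 2)
        = sp * R * s * c * E1 * (2 - R ^ 2 * s ^ 2 / 2) * (1 - u) := by ring
      _ ≤ sp * R * s * c * E1 * (2 - R ^ 2 * s ^ 2 / 2) * 1 :=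
          mul_le_mul_of_nonneg_left (by linarith) hK
      _ = sp * R * s * c * E1 * (2 - R ^ 2 * s ^ 2 / 2) := mul_one _
      _ ≤ _ := t2
  have hs3 : s ^ 3 ≤ s := by nlinarith
  have t3 : R ^ 2 * s ^ 3 * E2 * E1 ≤ 0.04 * s * 1 * 1 := by
    gcongr <;> linarith
  have t1 : -(2 * s * E) ≤ -(2 * s * 0.99) := by nlinarith
  nlinarith

lemma Dfun_neg (R φ : ℝ) (hR0 : 0 < R) (hR : R ≤ 0.2)
    (hs : 0 < Real.sin φ) (hc : 0 ≤ Real.cos φ) : Dfun R φ < 0 := by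
  have hE : (0.99 : ℝ) ≤ Real.exp (-R ^ 2 / 4) := by
    have := Real.add_one_le_exp (-R ^ 2 / 4)
    nlinarith
  have hE1le : Real.exp (-(R ^ 2 * Real.sin φ ^ 2) / 4) ≤ 1 :=
    Real.exp_le_one_iff.2 (by nlinarith [sq_nonneg (R * Real.sin φ)])
  have hE2le : Real.exp (-(R / 2 * Real.cos φ) ^ 2) ≤ 1 :=
    Real.exp_le_one_iff.2 (by nlinarith [sq_nonneg (R / 2 * Real.cos φ)])
  exact Dfun_neg_aux (Real.sin φ) (Real.cos φ) (erf (R / 2 * Real.cos φ)) _ _ _ _ R hR0 hR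
    hs (Real.sin_le_one φ) hc (Real.cos_le_one φ) (erf_nonneg (by positivity))
    (Real.exp_pos _) hE1le (Real.exp_pos _) hE2le hE (Real.sqrt_nonneg _) sqrt_pi_le

/-- For `R ≤ 0.2` one has `√π R e^{R²/4} ≤ 1/2`, hence the Gaussian area of the
infinite doubled cone `|C(R,∞,φ)| = 2 cos φ e^{-R²/4} + I(R,φ)` is strictly
decreasing in `φ` on `(0, π/2]`, and in particular is bounded by its value
`2 e^{-R²/4}` at `φ = 0`. -/
theorem stmt_9 (R : ℝ) (hR0 : 0 < R) (hR : R ≤ 0.2) :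
    Real.sqrt π * R * Real.exp (R ^ 2 / 4) ≤ 1 / 2 ∧
    StrictAntiOn (fun φ => 2 * Real.cos φ * Real.exp (-R ^ 2 / 4) + Ifun R φ)
      (Set.Ioc 0 (π / 2)) ∧
    ∀ φ ∈ Set.Icc 0 (π / 2),
      2 * Real.cos φ * Real.exp (-R ^ 2 / 4) + Ifun R φ ≤
        2 * Real.exp (-R ^ 2 / 4) := by
  set f : ℝ → ℝ := fun φ => 2 * Real.cos φ * Real.exp (-R ^ 2 / 4) + Ifun R φ with hf
  have hdiff : Differentiable ℝ f := fun x => (f_hasDerivAt R x).differentiableAt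
  have hderiv : ∀ x, deriv f x = Dfun R x := fun x => (f_hasDerivAt R x).deriv
  have hneg : ∀ x ∈ Set.Ioo (0 : ℝ) (π / 2), deriv f x < 0 := by
    intro x hx
    rw [hderiv]
    exact Dfun_neg R x hR0 hR
      (Real.sin_pos_of_pos_of_lt_pi hx.1 (by linarith [Real.pi_pos, hx.2]))
      (Real.cos_nonneg_of_mem_Icc ⟨by linarith [Real.pi_pos, hx.1], hx.2.le⟩)
  have hanti : StrictAntiOn f (Set.Ioc 0 (π / 2)) := by
    apply strictAntiOn_of_deriv_neg (convex_Ioc _ _) hdiff.continuous.continuousOn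
    intro x hx
    rw [interior_Ioc] at hx
    exact hneg x hx
  refine ⟨numeric R hR0 hR, hanti, ?_⟩
  have hanti2 : AntitoneOn f (Set.Icc 0 (π / 2)) := by
    apply antitoneOn_of_deriv_nonpos (convex_Icc _ _) hdiff.continuous.continuousOn
      (hdiff.differentiableOn)
    intro x hx
    rw [interior_Icc] at hx
    exact (hneg x hx).le
  intro φ hφ
  have h0 : (0 : ℝ) ∈ Set.Icc (0 : ℝ) (π / 2) := ⟨le_refl _, by positivity⟩
  have := hanti2 h0 hφ hφ.1
  have hf0 : f 0 = 2 * Real.exp (-R ^ 2 / 4) := by simp [hf, Ifun]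
  calc 2 * Real.cos φ * Real.exp (-R ^ 2 / 4) + Ifun R φ = f φ := rfl
    _ ≤ f 0 := this
    _ = 2 * Real.exp (-R ^ 2 / 4) := hf0
end

section
/- If rotationally symmetric positive functions J on the unit hemisphere solve Δ_{S²} J + 4J = 0 with J'(0) = 0 at the pole (azimuthal variable φ ∈ [0,π/2]), then J must vanish at some φ₀ < π/2: i.e., there is no positive solution of Δ_{S²}J + 4J = 0 on the open hemisphere that is smooth at the pole. This follows by Sturm–Liouville comparison with f(φ) = cos(φ), which satisfies Δ_{S²} f + 2f = 0, is positive on [0,π/2), and vanishes exactly at φ = π/2. -/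
open Real

/-- There is no positive rotationally symmetric solution of `Δ_{S²} J + 4J = 0` on the
open hemisphere that is smooth at the pole: writing `Δ_{S²} J = J'' + cot(φ) J'` for
radial functions of the azimuthal variable `φ`, no `C²` function `J` with `J'(0) = 0`
can satisfy `J'' + cot(φ) J' + 4J = 0` on `(0, π/2)` while remaining positive on
`[0, π/2)` (Sturm–Liouville comparison with `f = cos φ`, which solves
`Δ_{S²} f + 2f = 0` and first vanishes at `π/2`). -/
theorem stmt_17 :
    ¬ ∃ J : ℝ → ℝ, ContDiff ℝ 2 J ∧
      (∀ φ ∈ Set.Ioo (0 : ℝ) (π / 2),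
        deriv (deriv J) φ + (Real.cos φ / Real.sin φ) * deriv J φ + 4 * J φ = 0) ∧
      deriv J 0 = 0 ∧
      (∀ φ ∈ Set.Ico (0 : ℝ) (π / 2), 0 < J φ) := by
  rintro ⟨J, hJ, hode, -, hpos⟩
  -- differentiability facts
  have hJ1 : ∀ x : ℝ, HasDerivAt J (deriv J x) x := fun x =>
    (hJ.differentiable (by norm_num)).differentiableAt.hasDerivAt
  have hJd : Differentiable ℝ (deriv J) := by
    have := (contDiff_succ_iff_deriv (n := 1)).mp hJ
    exact this.2.2.differentiable (by norm_num)
  have hJ2 : ∀ x : ℝ, HasDerivAt (deriv J) (deriv (deriv J) x) x := fun x =>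
    (hJd x).hasDerivAt
  -- the Wronskian
  set W : ℝ → ℝ := fun x => Real.sin x * (Real.cos x * deriv J x + Real.sin x * J x) with hWdef
  have hW : ∀ x : ℝ, HasDerivAt W
      (Real.cos x * (Real.cos x * deriv J x + Real.sin x * J x) +
        Real.sin x * (((-Real.sin x) * deriv J x + Real.cos x * deriv (deriv J) x) +
          (Real.cos x * J x + Real.sin x * deriv J x))) x := by
    intro x
    exact (Real.hasDerivAt_sin x).mul
      (((((Real.hasDerivAt_cos x).mul (hJ2 x))).add ((Real.hasDerivAt_sin x).mul (hJ1 x))))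
  have hWdiff : ∀ x : ℝ, DifferentiableAt ℝ W x := fun x => (hW x).differentiableAt
  have hWcont : ContinuousOn W (Set.Icc 0 (π / 2)) :=
    (fun x _ => (hWdiff x).continuousAt.continuousWithinAt)
  have hpi2 : (0 : ℝ) < π / 2 := by positivity
  -- derivative is negative on the interior
  have hderiv_neg : ∀ x ∈ interior (Set.Icc (0 : ℝ) (π / 2)), deriv W x < 0 := by
    intro x hx
    rw [interior_Icc] at hx
    obtain ⟨hx0, hx2⟩ := hx
    have hsin : 0 < Real.sin x := Real.sin_pos_of_pos_of_lt_pi hx0 (by linarith [Real.pi_pos])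
    have hcos : 0 < Real.cos x := Real.cos_pos_of_mem_Ioo ⟨by linarith, hx2⟩
    have hJx : 0 < J x := hpos x ⟨le_of_lt hx0, hx2⟩
    have h := hode x ⟨hx0, hx2⟩
    have hmul : Real.sin x * deriv (deriv J) x + Real.cos x * deriv J x
        + 4 * (Real.sin x * J x) = 0 := by
      have hcs : Real.sin x * (Real.cos x / Real.sin x) = Real.cos x := by
        field_simp
      have h2 : Real.sin x * (deriv (deriv J) x + Real.cos x / Real.sin x * deriv J x
          + 4 * J x) = 0 := by rw [h, mul_zero]
      linear_combination h2 - deriv J x * hcs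
    rw [(hW x).deriv]
    have hval : Real.cos x * (Real.cos x * deriv J x + Real.sin x * J x) +
        Real.sin x * (((-Real.sin x) * deriv J x + Real.cos x * deriv (deriv J) x) +
          (Real.cos x * J x + Real.sin x * deriv J x)) =
        -(2 * Real.sin x * Real.cos x * J x) := by
      linear_combination Real.cos x * hmul
    rw [hval]
    have : 0 < 2 * Real.sin x * Real.cos x * J x := by positivity
    linarith
  have hanti : StrictAntiOn W (Set.Icc 0 (π / 2)) :=
    strictAntiOn_of_deriv_neg (convex_Icc _ _) hWcont hderiv_neg
  have hlt : W (π / 2) < W 0 :=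
    hanti (Set.left_mem_Icc.mpr (le_of_lt hpi2)) (Set.right_mem_Icc.mpr (le_of_lt hpi2)) hpi2
  have hW0 : W 0 = 0 := by simp [hWdef]
  have hWpi : W (π / 2) = J (π / 2) := by
    simp [hWdef, Real.sin_pi_div_two, Real.cos_pi_div_two]
  -- J (π/2) ≥ 0 by continuity
  have hJnn : 0 ≤ J (π / 2) := by
    have htend : Filter.Tendsto J (nhdsWithin (π / 2) (Set.Iio (π / 2))) (nhds (J (π / 2))) :=
      (hJ.continuous.continuousAt).continuousWithinAt.tendsto
    refine ge_of_tendsto htend ?_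
    filter_upwards [Ioo_mem_nhdsLT_of_mem (Set.mem_Ioc.mpr ⟨hpi2, le_rfl⟩)] with x hx
    exact le_of_lt (hpos x ⟨le_of_lt hx.1, hx.2⟩)
  rw [hW0, hWpi] at hlt
  linarith
end
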